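/- Let A₁,…,A_p be symmetric n×n real matrices with Aα³ = Aα for all α, and Aα = Aβ²Aα + AαAβ² + AβAαAβ for all α ≠ β. Suppose tr(Aα²) = t for all α. Then Σ_{α,β=1}^p ‖[Aα,Aβ]‖² = 6·tr((Σ_α Aα²)²) - 2(p+2)·p·t. -/

import Mathlib

open Matrix Finset

theorem stmt_7 {n p : ℕ} (A : Fin p → Matrix (Fin n) (Fin n) ℝ) (t : ℝ)
    (hsymm : ∀ α, (A α).IsSymm)
    (hcube : ∀ α, (A α) ^ 3 = A α)
    (hOT : ∀ α β, α ≠ β → A α = (A β) ^ 2 * A α + A α * (A β) ^ 2 + A β * A α * A β)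
    (htr : ∀ α, Matrix.trace ((A α) ^ 2) = t) :
    ∑ α, ∑ β, (- Matrix.trace ((A α * A β - A β * A α) ^ 2))
      = 6 * Matrix.trace ((∑ α, (A α) ^ 2) ^ 2) - 2 * (p + 2) * p * t := by
  set a : Fin p → Fin p → ℝ := fun α β => Matrix.trace ((A α) ^ 2 * (A β) ^ 2) with ha
  set b : Fin p → Fin p → ℝ := fun α β => Matrix.trace ((A α * A β) ^ 2) with hb
  have h2 : ∀ α β, Matrix.trace (A α * (A β) ^ 2 * A α) = a α β := by
    intro α β
    rw [Matrix.trace_mul_comm, ← mul_assoc, ← sq]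
  have h3 : ∀ α β, Matrix.trace (A β * A α * A β * A α) = b α β := by
    intro α β
    rw [Matrix.trace_mul_comm]
    congr 1
    rw [sq]
    noncomm_ring
  have hpow4 : ∀ α, (A α) ^ 4 = (A α) ^ 2 := by
    intro α
    rw [show (4:ℕ) = 3 + 1 from rfl, pow_succ, hcube, ← sq]
  have key : ∀ α β, 2 * a α β + b α β = t + (if α = β then 2 * t else 0) := by
    intro α β
    by_cases h : α = β
    · subst h
      rw [if_pos rfl]
      have ha4 : a α α = t := by
        simp only [ha]
        rw [← pow_add, show (2+2:ℕ) = 4 from rfl, hpow4, htr]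
      have hb4 : b α α = t := by
        simp only [hb]
        rw [← sq, ← pow_mul, show (2*2:ℕ) = 4 from rfl, hpow4, htr]
      rw [ha4, hb4]; ring
    · simp only [if_neg h]
      have e := congrArg (fun X => Matrix.trace (X * A α)) (hOT α β h)
      simp only [add_mul, Matrix.trace_add] at e
      rw [← sq, htr α] at e
      rw [mul_assoc ((A β)^2), ← sq, Matrix.trace_mul_comm, h2, h3] at e
      rw [e]; ring
  have step : ∀ α β, - Matrix.trace ((A α * A β - A β * A α) ^ 2)
      = 6 * a α β - 2 * (2 * a α β + b α β) := by
    intro α β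
    have hXX : Matrix.trace ((A α * A β) * (A α * A β)) = b α β := by rw [← sq]
    have hYY : Matrix.trace ((A β * A α) * (A β * A α)) = b α β := by
      rw [show A β * A α * (A β * A α) = A β * A α * A β * A α by noncomm_ring, h3]
    have hXY : Matrix.trace ((A α * A β) * (A β * A α)) = a α β := by
      rw [show A α * A β * (A β * A α) = A α * (A β)^2 * A α by rw [sq]; noncomm_ring, h2]
    have hYX : Matrix.trace ((A β * A α) * (A α * A β)) = a α β := by
      rw [Matrix.trace_mul_comm, hXY]
    rw [sq, sub_mul, mul_sub, mul_sub, Matrix.trace_sub, Matrix.trace_sub, Matrix.trace_sub,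
      hXX, hYY, hXY, hYX]
    ring
  have hS1 : Matrix.trace ((∑ α, (A α) ^ 2) ^ 2) = ∑ α, ∑ β, a α β := by
    rw [sq, Finset.sum_mul_sum]
    simp [ha]
  have hsum : ∑ α : Fin p, ∑ β : Fin p, (2 * a α β + b α β) = (p + 2) * p * t := by
    simp_rw [key, Finset.sum_add_distrib, Finset.sum_ite_eq, Finset.mem_univ, if_pos]
    simp [Finset.sum_const, Finset.card_univ, nsmul_eq_mul]
    ring
  simp_rw [step]
  rw [Finset.sum_congr rfl (fun α _ => Finset.sum_sub_distrib _ _), Finset.sum_sub_distrib]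
  have e1 : ∑ α : Fin p, ∑ β : Fin p, 2 * (2 * a α β + b α β) = 2 * ((p + 2) * p * t) := by
    simp_rw [← Finset.mul_sum]; rw [hsum]
  have e2 : ∑ α : Fin p, ∑ β : Fin p, 6 * a α β = 6 * ∑ α : Fin p, ∑ β : Fin p, a α β := by
    simp_rw [← Finset.mul_sum]
  rw [e1, e2, hS1]; ring
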